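/- Let β, c > 0 and let p ≥ 1 be a natural number. Define G(z) := z^{2p} · e^{−c z²} · (1 + e^{−βz})^{−1/2}, where the power −1/2 is taken with the principal branch of the square root. Then 1 + e^{−βz} has strictly positive real part on the strip S := {z ∈ ℂ : |Im z| < π/(2β)} (so G is well defined there), G is holomorphic on S, and for every r with 0 < r < π/(2β) one has sup_{y∈[−r,r]} ∫_ℝ |G(x+iy)|² dx < ∞. -/

import Mathlib

open Complex in
lemma form_factor_re_aux (β : ℝ) (z : ℂ) :
    (1 + Complex.exp (-(β : ℂ) * z)).re
      = 1 + Real.exp (-(β * z.re)) * Real.cos (β * z.im) := by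
  have h1 : (-(β : ℂ) * z).re = -(β * z.re) := by simp [Complex.mul_re]
  have h2 : (-(β : ℂ) * z).im = -(β * z.im) := by simp [Complex.mul_im]
  rw [Complex.add_re, Complex.one_re, Complex.exp_re, h1, h2, Real.cos_neg]

set_option maxHeartbeats 1000000 in
open Complex in
/-- **Analyticity and square-integrability of the glued form factor on a strip.**
Let `β, c > 0` and `p ≥ 1` a natural number, and let
`G(z) := z^{2p} e^{−cz²} (1 + e^{−βz})^{−1/2}` (principal branch of the square root).
Then `1 + e^{−βz}` has strictly positive real part on the strip
`S = {z : |Im z| < π/(2β)}`, `G` is holomorphic on `S`, and for every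
`0 < r < π/(2β)` one has `sup_{y∈[−r,r]} ∫_ℝ |G(x+iy)|² dx < ∞`. -/
theorem form_factor_strip_analyticity
    (β c : ℝ) (hβ : 0 < β) (hc : 0 < c) (p : ℕ) (hp : 1 ≤ p)
    (G : ℂ → ℂ)
    (hG : ∀ z : ℂ, G z = z ^ (2 * p) * Complex.exp (-(c : ℂ) * z ^ 2) *
        (1 + Complex.exp (-(β : ℂ) * z)) ^ (-(1 / 2) : ℂ)) :
    (∀ z : ℂ, |z.im| < Real.pi / (2 * β) → 0 < (1 + Complex.exp (-(β : ℂ) * z)).re) ∧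
    DifferentiableOn ℂ G {z : ℂ | |z.im| < Real.pi / (2 * β)} ∧
    ∀ r : ℝ, 0 < r → r < Real.pi / (2 * β) →
      (⨆ y ∈ Set.Icc (-r) r,
        ∫⁻ x : ℝ, (‖G ((x : ℂ) + (y : ℂ) * Complex.I)‖₊ : ENNReal) ^ 2) < ⊤ := by
  -- positivity of the real part on the strip
  have hpos : ∀ z : ℂ, |z.im| < Real.pi / (2 * β) →
      0 < (1 + Complex.exp (-(β : ℂ) * z)).re := by
    intro z hz
    rw [form_factor_re_aux]
    have habs : |β * z.im| < Real.pi / 2 := by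
      rw [abs_mul, abs_of_pos hβ]
      calc β * |z.im| < β * (Real.pi / (2 * β)) := by
            exact mul_lt_mul_of_pos_left hz hβ
        _ = Real.pi / 2 := by field_simp
    have hcos : 0 < Real.cos (β * z.im) := by
      rcases abs_lt.mp habs with ⟨h1, h2⟩
      exact Real.cos_pos_of_mem_Ioo ⟨h1, h2⟩
    have := mul_pos (Real.exp_pos (-(β * z.re))) hcos
    linarith
  refine ⟨hpos, ?_, ?_⟩
  · -- differentiability
    intro z hz
    have hz' : |z.im| < Real.pi / (2 * β) := hz
    have hdiff : DifferentiableAt ℂ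
        (fun w : ℂ => w ^ (2 * p) * Complex.exp (-(c : ℂ) * w ^ 2) *
          (1 + Complex.exp (-(β : ℂ) * w)) ^ (-(1 / 2) : ℂ)) z := by
      have h1 : DifferentiableAt ℂ (fun w : ℂ => w ^ (2 * p)) z :=
        (differentiable_pow (2 * p)).differentiableAt
      have h2 : DifferentiableAt ℂ (fun w : ℂ => Complex.exp (-(c : ℂ) * w ^ 2)) z :=
        (((differentiable_pow 2).const_mul (-(c : ℂ))).differentiableAt).cexp
      have h3 : DifferentiableAt ℂ
          (fun w : ℂ => (1 + Complex.exp (-(β : ℂ) * w)) ^ (-(1 / 2) : ℂ)) z := by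
        have hb : DifferentiableAt ℂ (fun w : ℂ => 1 + Complex.exp (-(β : ℂ) * w)) z :=
          (differentiableAt_const _).add
            ((differentiableAt_id.const_mul (-(β : ℂ))).cexp)
        exact hb.cpow (differentiableAt_const _)
          (Or.inl (hpos z hz'))
      exact (h1.mul h2).mul h3
    have : DifferentiableAt ℂ G z := by
      have : G = fun w : ℂ => w ^ (2 * p) * Complex.exp (-(c : ℂ) * w ^ 2) *
          (1 + Complex.exp (-(β : ℂ) * w)) ^ (-(1 / 2) : ℂ) := funext hG
      rw [this]; exact hdiff
    exact this.differentiableWithinAt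
  · -- uniform square integrability
    intro r hr hrlt
    have hβr : β * r < Real.pi / 2 := by
      calc β * r < β * (Real.pi / (2 * β)) := mul_lt_mul_of_pos_left hrlt hβ
        _ = Real.pi / 2 := by field_simp
    -- dominating function
    set K : ℝ := Real.exp (2 * c * r ^ 2) * 2 ^ (4 * p) with hK
    have hK0 : 0 ≤ K := by positivity
    set B : ℝ → ℝ := fun x =>
      K * (x ^ (4 * p) * Real.exp (-(2 * c) * x ^ 2)
        + r ^ (4 * p) * Real.exp (-(2 * c) * x ^ 2)) with hB
    have hint : MeasureTheory.Integrable B := by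
      have h2c : (0 : ℝ) < 2 * c := by linarith
      have h1 : MeasureTheory.Integrable
          (fun x : ℝ => x ^ (4 * p) * Real.exp (-(2 * c) * x ^ 2)) := by
        have hs : (-1 : ℝ) < ((4 * p : ℕ) : ℝ) := by
          have : (0:ℝ) ≤ ((4 * p : ℕ) : ℝ) := by positivity
          linarith
        have h0 := integrable_rpow_mul_exp_neg_mul_sq h2c hs
        have heq : (fun x : ℝ => x ^ (((4 * p : ℕ) : ℝ)) * Real.exp (-(2 * c) * x ^ 2))
            = fun x : ℝ => x ^ (4 * p) * Real.exp (-(2 * c) * x ^ 2) :=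
          funext fun x => by rw [Real.rpow_natCast]
        rwa [heq] at h0
      have h2 : MeasureTheory.Integrable
          (fun x : ℝ => r ^ (4 * p) * Real.exp (-(2 * c) * x ^ 2)) :=
        (integrable_exp_neg_mul_sq h2c).const_mul _
      exact (h1.add h2).const_mul K
    have hM : (∫⁻ x : ℝ, (‖B x‖₊ : ENNReal)) < ⊤ := hint.2
    -- pointwise bound
    have hbound : ∀ y ∈ Set.Icc (-r) r, ∀ x : ℝ,
        ‖G ((x : ℂ) + (y : ℂ) * Complex.I)‖ ^ 2 ≤ B x := by
      intro y hy x
      set z : ℂ := (x : ℂ) + (y : ℂ) * Complex.I with hzdef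
      have hre : z.re = x := by simp [hzdef]
      have him : z.im = y := by simp [hzdef]
      have hyr : |y| ≤ r := abs_le.mpr ⟨hy.1, hy.2⟩
      -- norm of the cpow factor
      have hwre : 1 ≤ (1 + Complex.exp (-(β : ℂ) * z)).re := by
        rw [form_factor_re_aux]
        have hcos : 0 ≤ Real.cos (β * z.im) := by
          apply Real.cos_nonneg_of_mem_Icc
          rw [him, Set.mem_Icc]
          have habs2 : |β * y| ≤ β * r := by
            rw [abs_mul, abs_of_pos hβ]
            exact mul_le_mul_of_nonneg_left hyr hβ.le
          rcases abs_le.mp habs2 with ⟨ha, hb⟩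
          exact ⟨by linarith, by linarith⟩
        nlinarith [Real.exp_pos (-(β * z.re)), mul_nonneg (Real.exp_pos (-(β * z.re))).le hcos]
      have hwne : (1 + Complex.exp (-(β : ℂ) * z)) ≠ 0 := by
        intro h
        have := hwre
        rw [h] at this
        simp only [Complex.zero_re] at this
        linarith
      have habsw : 1 ≤ ‖1 + Complex.exp (-(β : ℂ) * z)‖ :=
        le_trans hwre (Complex.re_le_norm _)
      have hcpow : ‖(1 + Complex.exp (-(β : ℂ) * z)) ^ (-(1 / 2) : ℂ)‖ ≤ 1 := by
        rw [Complex.norm_cpow_of_ne_zero hwne]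
        have hre2 : ((-(1 / 2) : ℂ)).re = -(1 / 2 : ℝ) := by norm_num
        have him2 : ((-(1 / 2) : ℂ)).im = 0 := by norm_num
        rw [hre2, him2, mul_zero, Real.exp_zero, div_one]
        exact Real.rpow_le_one_of_one_le_of_nonpos habsw (by norm_num)
      -- norm of the gaussian factor
      have hexp : ‖Complex.exp (-(c : ℂ) * z ^ 2)‖
          = Real.exp (-(c * (x ^ 2 - y ^ 2))) := by
        rw [Complex.norm_exp]
        congr 1
        have hzsq : (z ^ 2).re = x ^ 2 - y ^ 2 := by
          rw [sq, Complex.mul_re, hre, him]; ring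
        have hzsqim : (z ^ 2).im = 2 * (x * y) := by
          rw [sq, Complex.mul_im, hre, him]; ring
        rw [Complex.mul_re, hzsq, hzsqim]
        simp only [Complex.neg_re, Complex.neg_im, Complex.ofReal_re, Complex.ofReal_im]
        ring
      -- norm of the power factor
      have hzabs : ‖z‖ ≤ |x| + r := by
        calc ‖z‖ ≤ ‖(x : ℂ)‖ + ‖(y : ℂ) * Complex.I‖ := norm_add_le _ _
          _ = |x| + |y| := by simp
          _ ≤ |x| + r := by linarith
      have hnorm : ‖G z‖ ≤ (|x| + r) ^ (2 * p) * (Real.exp (c * r ^ 2) *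
          Real.exp (-c * x ^ 2)) := by
        rw [hG z]
        rw [norm_mul, norm_mul, norm_pow, hexp]
        have h1 : ‖z‖ ^ (2 * p) ≤ (|x| + r) ^ (2 * p) :=
          pow_le_pow_left₀ (norm_nonneg _) hzabs _
        have h2 : Real.exp (-(c * (x ^ 2 - y ^ 2)))
            ≤ Real.exp (c * r ^ 2) * Real.exp (-c * x ^ 2) := by
          rw [← Real.exp_add]
          apply Real.exp_le_exp.mpr
          have hy2 : y ^ 2 ≤ r ^ 2 := by
            rcases abs_le.mp hyr with ⟨ha, hb⟩
            exact sq_le_sq' ha hb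
          nlinarith [hy2, hc.le]
        calc ‖z‖ ^ (2 * p) * Real.exp (-(c * (x ^ 2 - y ^ 2))) *
              ‖(1 + Complex.exp (-(β:ℂ) * z)) ^ (-(1/2) : ℂ)‖
            ≤ ‖z‖ ^ (2 * p) * Real.exp (-(c * (x ^ 2 - y ^ 2))) * 1 := by
              apply mul_le_mul_of_nonneg_left hcpow
              positivity
          _ = ‖z‖ ^ (2 * p) * Real.exp (-(c * (x ^ 2 - y ^ 2))) := mul_one _
          _ ≤ (|x| + r) ^ (2 * p) * (Real.exp (c * r ^ 2) * Real.exp (-c * x ^ 2)) := by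
              apply mul_le_mul h1 h2 (Real.exp_pos _).le (by positivity)
      -- square it
      have hGnn : 0 ≤ ‖G z‖ := norm_nonneg _
      have hsq : ‖G z‖ ^ 2 ≤ ((|x| + r) ^ (2 * p) * (Real.exp (c * r ^ 2) *
          Real.exp (-c * x ^ 2))) ^ 2 := by
        apply pow_le_pow_left₀ hGnn hnorm
      refine le_trans hsq ?_
      have hpowbound : (|x| + r) ^ (4 * p) ≤ 2 ^ (4 * p) * (x ^ (4 * p) + r ^ (4 * p)) := by
        have h1 : |x| + r ≤ 2 * max |x| r := by
          rcases le_total |x| r with h | h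
          · calc |x| + r ≤ r + r := by linarith
              _ = 2 * r := by ring
              _ ≤ 2 * max |x| r := by
                  apply mul_le_mul_of_nonneg_left (le_max_right _ _) (by norm_num)
          · calc |x| + r ≤ |x| + |x| := by linarith
              _ = 2 * |x| := by ring
              _ ≤ 2 * max |x| r := by
                  apply mul_le_mul_of_nonneg_left (le_max_left _ _) (by norm_num)
        calc (|x| + r) ^ (4 * p) ≤ (2 * max |x| r) ^ (4 * p) := by
              apply pow_le_pow_left₀ (by positivity) h1
          _ = 2 ^ (4 * p) * (max |x| r) ^ (4 * p) := by rw [mul_pow]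
          _ ≤ 2 ^ (4 * p) * (x ^ (4 * p) + r ^ (4 * p)) := by
              apply mul_le_mul_of_nonneg_left _ (by positivity)
              have hmax : (max |x| r) ^ (4 * p) = max (|x| ^ (4 * p)) (r ^ (4 * p)) := by
                rcases le_total |x| r with h | h
                · rw [max_eq_right h, max_eq_right (pow_le_pow_left₀ (abs_nonneg x) h _)]
                · rw [max_eq_left h, max_eq_left (pow_le_pow_left₀ hr.le h _)]
              rw [hmax]
              have hx4 : (0:ℝ) ≤ x ^ (4 * p) := by
                rw [show 4 * p = 2 * (2 * p) by ring, pow_mul]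
                positivity
              have hxabs : |x| ^ (4 * p) = x ^ (4 * p) := by
                rw [← _root_.abs_pow, _root_.abs_of_nonneg hx4]
              rw [hxabs]
              apply max_le
              · nlinarith [pow_pos hr (4 * p), show 0 ≤ r ^ (4*p) by positivity]
              · nlinarith [show (0:ℝ) ≤ x ^ (4*p) by
                  rw [show 4 * p = 2 * (2 * p) by ring, pow_mul]; positivity]
      calc ((|x| + r) ^ (2 * p) * (Real.exp (c * r ^ 2) * Real.exp (-c * x ^ 2))) ^ 2
          = (|x| + r) ^ (4 * p) * (Real.exp (2 * c * r ^ 2) *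
              Real.exp (-(2 * c) * x ^ 2)) := by
            have e1 : Real.exp (c * r ^ 2) ^ 2 = Real.exp (2 * c * r ^ 2) := by
              rw [sq, ← Real.exp_add]; ring_nf
            have e2 : Real.exp (-c * x ^ 2) ^ 2 = Real.exp (-(2 * c) * x ^ 2) := by
              rw [sq, ← Real.exp_add]; ring_nf
            rw [mul_pow, ← pow_mul, mul_pow, e1, e2]
            ring
        _ ≤ 2 ^ (4 * p) * (x ^ (4 * p) + r ^ (4 * p)) *
              (Real.exp (2 * c * r ^ 2) * Real.exp (-(2 * c) * x ^ 2)) := by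
            apply mul_le_mul_of_nonneg_right hpowbound (by positivity)
        _ = B x := by rw [hB, hK]; ring
    -- conclude
    have hle : ∀ y ∈ Set.Icc (-r) r,
        (∫⁻ x : ℝ, (‖G ((x : ℂ) + (y : ℂ) * Complex.I)‖₊ : ENNReal) ^ 2)
          ≤ ∫⁻ x : ℝ, (‖B x‖₊ : ENNReal) := by
      intro y hy
      apply MeasureTheory.lintegral_mono
      intro x
      dsimp only
      rw [← ENNReal.coe_pow, ENNReal.coe_le_coe, ← NNReal.coe_le_coe]
      push_cast
      calc ‖G ((x : ℂ) + (y : ℂ) * Complex.I)‖ ^ 2 ≤ B x := hbound y hy x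
        _ ≤ |B x| := le_abs_self _
        _ = ‖B x‖ := (Real.norm_eq_abs _).symm
    exact lt_of_le_of_lt (iSup₂_le hle) hM
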